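/- Fix q ∈ ℝ^d with q ≠ 0, η > 0, x ∈ ℝ^d, and y ∈ {−1, 1}, and write p = ⟨q, x⟩. Define s : [0,∞) → ℝ by s(h) = (p y − ln(h η ‖q‖² + e^{p y})) / (‖q‖² y). Then s(0) = 0 and s'(h) = −η y e^{−y ⟨q, x − s(h) q⟩} for all h ≥ 0; that is, s is the IWA scaling function for the exponential loss ℓ̂(r) = e^{−y r}. -/

import Mathlib

open scoped RealInnerProductSpace

/-- The explicit IWA scaling function for the exponential loss
`ℓ̂(r) = e^{-y r}` with `y ∈ {-1, 1}`:
`s(h) = (p y - ln(hη‖q‖² + e^{p y})) / (‖q‖² y)` satisfies `s(0) = 0` and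
`s'(h) = -η y e^{-y ⟨q, x - s(h) q⟩}` for all `h ≥ 0`. -/
theorem iwa_scaling_exponential_loss
    (d : ℕ) (q : EuclideanSpace ℝ (Fin d)) (hq : q ≠ 0) (η : ℝ) (hη : 0 < η)
    (x : EuclideanSpace ℝ (Fin d)) (y : ℝ) (hy : y = -1 ∨ y = 1)
    (p : ℝ) (hp : p = ⟪q, x⟫)
    (s : ℝ → ℝ)
    (hs : ∀ h : ℝ,
      s h = (p * y - Real.log (h * η * ‖q‖ ^ 2 + Real.exp (p * y))) / (‖q‖ ^ 2 * y)) :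
    s 0 = 0 ∧ ∀ h : ℝ, 0 ≤ h →
      HasDerivAt s (-(η * y * Real.exp (-(y * ⟪q, x - s h • q⟫)))) h := by
  set A : ℝ := ‖q‖ ^ 2 with hAdef
  have hA : 0 < A := by
    have : 0 < ‖q‖ := norm_pos_iff.mpr hq
    positivity
  have hy2 : y * y = 1 := by rcases hy with h | h <;> simp [h]
  have hyne : y ≠ 0 := by rcases hy with h | h <;> simp [h]
  constructor
  · rw [hs 0]
    simp [Real.log_exp]
  · intro h hh
    set E : ℝ := Real.exp (p * y) with hE
    have hD : 0 < h * η * A + E := by positivity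
    -- derivative of the explicit formula
    have h1 : HasDerivAt (fun t : ℝ => t * η * A + E) (η * A) h := by
      simpa [mul_assoc] using ((hasDerivAt_id h).mul_const (η * A)).add_const E
    have h2 : HasDerivAt (fun t : ℝ => Real.log (t * η * A + E)) (η * A / (h * η * A + E)) h :=
      h1.log hD.ne'
    have h3 : HasDerivAt s (-(η * A / (h * η * A + E)) / (A * y)) h := by
      have : HasDerivAt (fun t : ℝ =>
          (p * y - Real.log (t * η * A + E)) / (A * y))
          ((0 - η * A / (h * η * A + E)) / (A * y)) h :=
        ((hasDerivAt_const h (p * y)).sub h2).div_const (A * y)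
      have heq : s = fun t : ℝ =>
          (p * y - Real.log (t * η * A + E)) / (A * y) := funext fun t => hs t
      rw [heq]
      simpa using this
    convert h3 using 1
    -- compute the inner product
    have hinner : ⟪q, x - s h • q⟫ = p - s h * A := by
      rw [inner_sub_right, real_inner_smul_right, real_inner_self_eq_norm_sq, hp]
    rw [hinner, hs h]
    have hlog : y * ((p * y - Real.log (h * η * A + E)) / (A * y) * A)
        = p * y - Real.log (h * η * A + E) := by
      field_simp
    have : -(y * (p - (p * y - Real.log (h * η * A + E)) / (A * y) * A))
        = -Real.log (h * η * A + E) + (p * y - y * p) := by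
      rw [mul_sub, hlog]; ring
    rw [this]
    have : Real.exp (-Real.log (h * η * A + E) + (p * y - y * p))
        = (h * η * A + E)⁻¹ := by
      rw [show p * y - y * p = 0 by ring, add_zero, Real.exp_neg, Real.exp_log hD]
    rw [this]
    field_simp
    linear_combination (-(h * η * A + E)⁻¹) * hy2
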